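/- Let G be a directed graph on N vertices with adjacency matrix A. The number of Hamiltonian cycles starting at any fixed vertex (equivalently, rooted Hamiltonian cycles counted once per cycle) equals (1/N) ∑_{D ∈ 𝒟} (−1)^{N−|D|} Tr((A_D)^N), where 𝒟 is the set of weakly connected dominating subsets of V. -/

import Mathlib

open scoped Classical

/-- Restriction of a matrix to a subset of indices (zero outside `S × S`). -/
def restrict {N : ℕ} {R : Type} [Zero R] (M : Matrix (Fin N) (Fin N) R) (S : Finset (Fin N)) :
    Matrix (Fin N) (Fin N) R :=
  fun i j => if i ∈ S ∧ j ∈ S then M i j else 0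

/-- The subgraph induced by `C` is weakly connected. -/
def WConn {N : ℕ} (E : Fin N → Fin N → Prop) (C : Finset (Fin N)) : Prop :=
  ∀ i ∈ C, ∀ j ∈ C,
    Relation.ReflTransGen (fun a b => a ∈ C ∧ b ∈ C ∧ (E a b ∨ E b a)) i j

/-- The weak neighborhood of `C`: vertices outside `C` with an edge to or from `C`. -/
noncomputable def wNbhd {N : ℕ} (E : Fin N → Fin N → Prop) (C : Finset (Fin N)) :
    Finset (Fin N) :=
  Finset.univ.filter (fun i => i ∉ C ∧ ∃ j ∈ C, E i j ∨ E j i)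


lemma pow_apply_walks {n : ℕ} (M : Matrix (Fin (n+1)) (Fin (n+1)) ℚ) :
    ∀ (k : ℕ) (i j : Fin (n+1)), (M ^ (k+1)) i j =
      ∑ w : Fin k → Fin (n+1),
        (∏ m : Fin k, M (Fin.cons (α := fun _ => Fin (n+1)) i w m.castSucc) (Fin.cons (α := fun _ => Fin (n+1)) i w m.succ)) *
          M (Fin.cons (α := fun _ => Fin (n+1)) i w (Fin.last k)) j := by
  intro k
  induction k with
  | zero =>
    intro i j
    simp [Finset.sum_const, Fintype.card_fun]
  | succ k ih =>
    intro i j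
    rw [pow_succ']
    rw [Matrix.mul_apply]
    have : ∀ a, (M ^ (k+1)) a j =
        ∑ w : Fin k → Fin (n+1),
          (∏ m : Fin k, M (Fin.cons (α := fun _ => Fin (n+1)) a w m.castSucc) (Fin.cons (α := fun _ => Fin (n+1)) a w m.succ)) *
            M (Fin.cons (α := fun _ => Fin (n+1)) a w (Fin.last k)) j := fun a => ih a j
    simp_rw [this, Finset.mul_sum]
    rw [← Fintype.sum_prod_type']
    apply Fintype.sum_equiv (Fin.consEquiv (fun _ => Fin (n+1)))
    intro p
    obtain ⟨a, w⟩ := p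
    rw [show ((Fin.consEquiv fun _ => Fin (n+1)) (a, w)) = Fin.cons (α := fun _ => Fin (n+1)) a w from rfl]
    rw [Fin.prod_univ_succ]
    have h0 : Fin.cons (α := fun _ => Fin (n+1)) i (Fin.cons (α := fun _ => Fin (n+1)) a w) ((0 : Fin (k+1)).castSucc) = i := rfl
    have h1 : Fin.cons (α := fun _ => Fin (n+1)) i (Fin.cons (α := fun _ => Fin (n+1)) a w) ((0 : Fin (k+1)).succ) = a := rfl
    have h2 : ∀ m : Fin k, Fin.cons (α := fun _ => Fin (n+1)) i (Fin.cons (α := fun _ => Fin (n+1)) a w) (m.succ.castSucc) = Fin.cons (α := fun _ => Fin (n+1)) a w m.castSucc := by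
      intro m; rw [← Fin.succ_castSucc]; rfl
    have h3 : ∀ m : Fin k, Fin.cons (α := fun _ => Fin (n+1)) i (Fin.cons (α := fun _ => Fin (n+1)) a w) (m.succ.succ) = Fin.cons (α := fun _ => Fin (n+1)) a w m.succ := by
      intro m; rfl
    have h4 : Fin.cons (α := fun _ => Fin (n+1)) i (Fin.cons (α := fun _ => Fin (n+1)) a w) (Fin.last (k+1)) = Fin.cons (α := fun _ => Fin (n+1)) a w (Fin.last k) := by
      rw [← Fin.succ_last]; rfl
    rw [h4]
    simp only [h2, h3]
    rw [show M (Fin.cons (α := fun _ => Fin (n+1)) i (Fin.cons (α := fun _ => Fin (n+1)) a w) ((0 : Fin (k+1)).castSucc)) (Fin.cons (α := fun _ => Fin (n+1)) i (Fin.cons (α := fun _ => Fin (n+1)) a w) ((0 : Fin (k+1)).succ)) = M i a from rfl]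
    ring

lemma trace_walks {n : ℕ} (M : Matrix (Fin (n+1)) (Fin (n+1)) ℚ) :
    Matrix.trace (M ^ (n+1)) =
      ∑ w : Fin (n+1) → Fin (n+1),
        (∏ m : Fin n, M (w m.castSucc) (w m.succ)) * M (w (Fin.last n)) (w 0) := by
  rw [Matrix.trace]
  have : ∀ i : Fin (n+1), (M ^ (n+1)).diag i =
      ∑ w : Fin n → Fin (n+1),
        (∏ m : Fin n, M (Fin.cons (α := fun _ => Fin (n+1)) i w m.castSucc)
            (Fin.cons (α := fun _ => Fin (n+1)) i w m.succ)) *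
          M (Fin.cons (α := fun _ => Fin (n+1)) i w (Fin.last n)) i :=
    fun i => pow_apply_walks M n i i
  simp_rw [this]
  rw [← Fintype.sum_prod_type']
  apply Fintype.sum_equiv (Fin.consEquiv (fun _ => Fin (n+1)))
  intro p
  obtain ⟨a, w⟩ := p
  rw [show ((Fin.consEquiv fun _ => Fin (n+1)) (a, w)) = Fin.cons (α := fun _ => Fin (n+1)) a w from rfl]
  rfl


lemma trace_restrict {n : ℕ} (E : Fin (n+1) → Fin (n+1) → Prop) (A : Matrix (Fin (n+1)) (Fin (n+1)) ℚ)
    (hA : ∀ i j, A i j = if E i j then 1 else 0) (D : Finset (Fin (n+1)))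
    (hTW : Matrix.trace (restrict A D ^ (n+1)) =
      ∑ w : Fin (n+1) → Fin (n+1),
        (∏ m : Fin n, restrict A D (w m.castSucc) (w m.succ)) *
          restrict A D (w (Fin.last n)) (w 0)) :
    Matrix.trace (restrict A D ^ (n+1)) =
      ∑ w : Fin (n+1) → Fin (n+1),
        if ((∀ m : Fin n, E (w m.castSucc) (w m.succ)) ∧ E (w (Fin.last n)) (w 0))
            ∧ (∀ k, w k ∈ D) then (1 : ℚ) else 0 := by
  rw [hTW]
  apply Finset.sum_congr rfl
  intro w _
  have hres : ∀ a b, restrict A D a b = if (a ∈ D ∧ b ∈ D) ∧ E a b then (1:ℚ) else 0 := by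
    intro a b
    unfold restrict
    rw [hA]
    by_cases h1 : a ∈ D ∧ b ∈ D <;> by_cases h2 : E a b <;> simp [h1, h2]
  simp_rw [hres]
  rw [Finset.prod_boole]
  rw [ite_zero_mul_ite_zero, mul_one]
  congr 1
  simp only [eq_iff_iff]
  constructor
  · rintro ⟨hall, ⟨hl, h0⟩, hlast⟩
    refine ⟨⟨fun m => (hall m (Finset.mem_univ m)).2, hlast⟩, ?_⟩
    intro k
    by_cases hk : k = 0
    · rw [hk]; exact h0
    · have : k = (k.pred hk).succ := (Fin.succ_pred k hk).symm
      rw [this]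
      exact (hall (k.pred hk) (Finset.mem_univ _)).1.2
  · rintro ⟨⟨hall, hlast⟩, hmem⟩
    exact ⟨fun m _ => ⟨⟨hmem _, hmem _⟩, hall m⟩, ⟨hmem _, hmem _⟩, hlast⟩

section
variable {N : ℕ} (E : Fin N → Fin N → Prop)

def rel (D : Finset (Fin N)) (a b : Fin N) : Prop :=
  a ∈ D ∧ b ∈ D ∧ (E a b ∨ E b a)

lemma rel_symm (D : Finset (Fin N)) : Symmetric (rel E D) :=
  fun _ _ h => ⟨h.2.1, h.1, h.2.2.symm⟩

noncomputable def Kset (c₀ : Fin N) (D : Finset (Fin N)) : Finset (Fin N) :=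
  D.filter (fun x => Relation.ReflTransGen (rel E D) c₀ x)

variable {E} {c₀ : Fin N} {D : Finset (Fin N)}

lemma Kset_subset : Kset E c₀ D ⊆ D := Finset.filter_subset _ _

lemma mem_Kset_self (hc : c₀ ∈ D) : c₀ ∈ Kset E c₀ D :=
  Finset.mem_filter.2 ⟨hc, Relation.ReflTransGen.refl⟩

lemma Kset_closed {x y : Fin N} (hx : x ∈ Kset E c₀ D) (hy : y ∈ D)
    (he : E x y ∨ E y x) : y ∈ Kset E c₀ D := by
  obtain ⟨hxD, hp⟩ := Finset.mem_filter.1 hx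
  exact Finset.mem_filter.2 ⟨hy, hp.tail ⟨hxD, hy, he⟩⟩

lemma reach_mem_Kset (hc : c₀ ∈ D) {x : Fin N}
    (h : Relation.ReflTransGen (rel E D) c₀ x) : x ∈ Kset E c₀ D := by
  induction h with
  | refl => exact mem_Kset_self hc
  | tail _ hstep ih => exact Kset_closed ih hstep.2.1 hstep.2.2

lemma subset_Kset {C : Finset (Fin N)} (hC : WConn E C) (hc : c₀ ∈ C) (hCD : C ⊆ D) :
    C ⊆ Kset E c₀ D := by
  intro j hj
  refine Finset.mem_filter.2 ⟨hCD hj, ?_⟩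
  exact Relation.ReflTransGen.mono (r := fun a b => a ∈ C ∧ b ∈ C ∧ (E a b ∨ E b a)) (p := rel E D)
    (fun a b hab => ⟨hCD hab.1, hCD hab.2.1, hab.2.2⟩) c₀ j (hC c₀ hc j hj)

/-- D satisfies the connected-dominating condition iff the component of `c₀` dominates. -/
lemma cond_iff_Kset (hc : c₀ ∈ D) :
    (WConn E D ∧ D ∪ wNbhd E D = Finset.univ) ↔
      Kset E c₀ D ∪ wNbhd E (Kset E c₀ D) = Finset.univ := by
  constructor
  · rintro ⟨hconn, hdom⟩
    have hK : Kset E c₀ D = D := by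
      apply Finset.Subset.antisymm Kset_subset
      intro j hj
      exact Finset.mem_filter.2 ⟨hj, hconn c₀ hc j hj⟩
    rw [hK]; exact hdom
  · intro hdom
    have hK : Kset E c₀ D = D := by
      apply Finset.Subset.antisymm Kset_subset
      intro u hu
      have : u ∈ Kset E c₀ D ∪ wNbhd E (Kset E c₀ D) := by
        rw [hdom]; exact Finset.mem_univ u
      rcases Finset.mem_union.1 this with h | h
      · exact h
      · obtain ⟨hnot, j, hj, he⟩ := (Finset.mem_filter.1 h).2
        exact absurd (Kset_closed hj hu he.symm) hnot
    constructor
    · intro a ha b hb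
      rw [← hK] at ha hb
      have hpa := (Finset.mem_filter.1 ha).2
      have hpb := (Finset.mem_filter.1 hb).2
      exact ((@Relation.ReflTransGen.stdSymm _ _ ⟨fun a b h => rel_symm E D h⟩).symm _ _ hpa).trans hpb
    · rw [← hK]; exact hdom

lemma Kset_toggle_subset1 {D₁ D₂ : Finset (Fin N)} {v : Fin N}
    (hmem : ∀ x, x ≠ v → (x ∈ D₁ ↔ x ∈ D₂)) (hc2 : c₀ ∈ D₂)
    (hv : ∀ j ∈ Kset E c₀ D₂, ¬(E v j ∨ E j v)) :
    Kset E c₀ D₁ ⊆ Kset E c₀ D₂ := by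
  intro x hx
  have hp := (Finset.mem_filter.1 hx).2
  clear hx
  induction hp with
  | refl => exact mem_Kset_self hc2
  | @tail y z _ hstep ih =>
    by_cases hxv : z = v
    · exact absurd (hxv ▸ hstep.2.2.symm) (hv y ih)
    · exact Kset_closed ih ((hmem z hxv).1 hstep.2.1) hstep.2.2

lemma Kset_toggle_subset2 {D₁ D₂ : Finset (Fin N)} {v : Fin N}
    (hmem : ∀ x, x ≠ v → (x ∈ D₁ ↔ x ∈ D₂)) (hc1 : c₀ ∈ D₁) (hc2 : c₀ ∈ D₂)
    (hv : ∀ j ∈ Kset E c₀ D₁, ¬(E v j ∨ E j v)) :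
    Kset E c₀ D₁ ⊆ Kset E c₀ D₂ := by
  intro x hx
  have hp := (Finset.mem_filter.1 hx).2
  clear hx
  have key : ∀ x, Relation.ReflTransGen (rel E D₁) c₀ x → x ∈ Kset E c₀ D₂ := by
    intro x hp
    induction hp with
    | refl => exact mem_Kset_self hc2
    | @tail y z hpre hstep ih =>
      by_cases hxv : z = v
      · exact absurd (hxv ▸ hstep.2.2.symm) (hv y (reach_mem_Kset hc1 hpre))
      · exact Kset_closed ih ((hmem z hxv).1 hstep.2.1) hstep.2.2
  exact key x hp

def toggle (D : Finset (Fin N)) (v : Fin N) : Finset (Fin N) :=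
  if v ∈ D then D.erase v else insert v D

lemma mem_toggle_iff {D : Finset (Fin N)} {v x : Fin N} (hx : x ≠ v) :
    x ∈ toggle D v ↔ x ∈ D := by
  unfold toggle
  split_ifs with h
  · exact Finset.mem_erase.trans (by simp [hx])
  · simp [hx]

lemma toggle_toggle (D : Finset (Fin N)) (v : Fin N) : toggle (toggle D v) v = D := by
  unfold toggle
  split_ifs with h h1 h2
  · simp at h1
  · exact Finset.insert_erase h
  · exact Finset.erase_insert h
  · exact absurd (Finset.mem_insert_self v D) h2

lemma toggle_card (D : Finset (Fin N)) (v : Fin N) :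
    (toggle D v).card = D.card + 1 ∨ D.card = (toggle D v).card + 1 := by
  unfold toggle
  split_ifs with h
  · right
    rw [Finset.card_erase_of_mem h]
    have : 0 < D.card := Finset.card_pos.2 ⟨v, h⟩
    omega
  · left
    rw [Finset.card_insert_of_notMem h]

lemma Kset_toggle (hc : c₀ ∈ D) {v : Fin N}
    (hvK : v ∉ Kset E c₀ D ∪ wNbhd E (Kset E c₀ D)) :
    Kset E c₀ (toggle D v) = Kset E c₀ D := by
  have hvnotK : v ∉ Kset E c₀ D := fun h => hvK (Finset.mem_union_left _ h)
  have hcv : c₀ ≠ v := fun h => hvnotK (h ▸ mem_Kset_self hc)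
  have hv : ∀ j ∈ Kset E c₀ D, ¬(E v j ∨ E j v) := by
    intro j hj he
    exact hvK (Finset.mem_union_right _ (Finset.mem_filter.2
      ⟨Finset.mem_univ v, hvnotK, j, hj, he⟩))
  have hct : c₀ ∈ toggle D v := (mem_toggle_iff hcv).2 hc
  apply Finset.Subset.antisymm
  · exact Kset_toggle_subset1 (fun x hx => mem_toggle_iff hx) hc hv
  · exact Kset_toggle_subset2 (fun x hx => (mem_toggle_iff hx).symm) hc hct hv
noncomputable def badV (c₀ : Fin N) (E : Fin N → Fin N → Prop) (D : Finset (Fin N)) : Fin N :=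
  if h : (Finset.univ \ (Kset E c₀ D ∪ wNbhd E (Kset E c₀ D))).Nonempty
  then (Finset.univ \ (Kset E c₀ D ∪ wNbhd E (Kset E c₀ D))).min' h else c₀

lemma badV_not_mem (hne : Kset E c₀ D ∪ wNbhd E (Kset E c₀ D) ≠ Finset.univ) :
    badV c₀ E D ∉ Kset E c₀ D ∪ wNbhd E (Kset E c₀ D) := by
  have h : (Finset.univ \ (Kset E c₀ D ∪ wNbhd E (Kset E c₀ D))).Nonempty := by
    rw [Finset.sdiff_nonempty]
    intro hsub
    exact hne (Finset.Subset.antisymm (Finset.subset_univ _) hsub)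
  have := Finset.min'_mem _ h
  rw [badV, dif_pos h]
  exact (Finset.mem_sdiff.1 this).2

lemma badV_congr {D₁ D₂ : Finset (Fin N)} (h : Kset E c₀ D₁ = Kset E c₀ D₂) :
    badV c₀ E D₁ = badV c₀ E D₂ := by
  rw [badV, badV, h]

lemma cancel_sum (C : Finset (Fin N)) (hc : c₀ ∈ C) (hC : WConn E C) :
    ∑ D ∈ Finset.univ.powerset.filter
        (fun D => C ⊆ D ∧ ¬(WConn E D ∧ D ∪ wNbhd E D = Finset.univ)),
      ((-1) : ℚ) ^ (N - D.card) = 0 := by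
  set s := Finset.univ.powerset.filter
      (fun D => C ⊆ D ∧ ¬(WConn E D ∧ D ∪ wNbhd E D = Finset.univ)) with hs
  have hmem : ∀ D ∈ s, C ⊆ D ∧ ¬(WConn E D ∧ D ∪ wNbhd E D = Finset.univ) :=
    fun D hD => (Finset.mem_filter.1 hD).2
  -- facts for D ∈ s
  have facts : ∀ D ∈ s, toggle D (badV c₀ E D) ∈ s ∧
      badV c₀ E (toggle D (badV c₀ E D)) = badV c₀ E D := by
    intro D hD
    obtain ⟨hCD, hncond⟩ := hmem D hD
    have hc₀D : c₀ ∈ D := hCD hc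
    have hKne : Kset E c₀ D ∪ wNbhd E (Kset E c₀ D) ≠ Finset.univ :=
      fun h => hncond ((cond_iff_Kset hc₀D).2 h)
    have hv := badV_not_mem (E := E) (c₀ := c₀) (D := D) hKne
    have hKt : Kset E c₀ (toggle D (badV c₀ E D)) = Kset E c₀ D := Kset_toggle hc₀D hv
    have hvK : badV c₀ E D ∉ Kset E c₀ D := fun h => hv (Finset.mem_union_left _ h)
    have hCsub : C ⊆ Kset E c₀ D := subset_Kset hC hc hCD
    have hCt : C ⊆ toggle D (badV c₀ E D) := by
      intro x hx
      have hxv : x ≠ badV c₀ E D := fun h => hvK (h ▸ hCsub hx)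
      exact (mem_toggle_iff hxv).2 (hCD hx)
    have hc₀t : c₀ ∈ toggle D (badV c₀ E D) := hCt hc
    refine ⟨Finset.mem_filter.2 ⟨Finset.mem_powerset.2 (Finset.subset_univ _), hCt, ?_⟩, ?_⟩
    · intro hcond
      have := (cond_iff_Kset hc₀t).1 hcond
      rw [hKt] at this
      exact hKne this
    · exact badV_congr hKt
  apply Finset.sum_involution (fun D hD => toggle D (badV c₀ E D))
  · -- signs cancel
    intro D hD
    have hD1 : D.card ≤ N := by
      have := Finset.card_le_univ D
      simpa using this
    have hD2 : (toggle D (badV c₀ E D)).card ≤ N := by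
      have := Finset.card_le_univ (toggle D (badV c₀ E D))
      simpa using this
    rcases toggle_card D (badV c₀ E D) with h | h
    · rw [show N - D.card = (N - (toggle D (badV c₀ E D)).card) + 1 from by omega, pow_succ]
      ring
    · rw [show N - (toggle D (badV c₀ E D)).card = (N - D.card) + 1 from by omega, pow_succ]
      ring
  · -- g ≠ id
    intro D hD _
    intro heq
    by_cases h : badV c₀ E D ∈ D
    · have hnot : badV c₀ E D ∉ toggle D (badV c₀ E D) := by
        rw [toggle, if_pos h]; simp
      rw [heq] at hnot; exact hnot h
    · have hin : badV c₀ E D ∈ toggle D (badV c₀ E D) := by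
        rw [toggle, if_neg h]; exact Finset.mem_insert_self _ _
      rw [heq] at hin; exact h hin
  · -- g_mem
    intro D hD
    exact (facts D hD).1
  · -- g_inv
    intro D hD
    rw [(facts D hD).2, toggle_toggle]
lemma neg_one_pow_sub {a b : ℕ} (h : a ≤ b) : ((-1 : ℚ)) ^ (b - a) = (-1) ^ b * (-1) ^ a := by
  rw [← pow_add, show b + a = (b - a) + 2 * a from by omega, pow_add, pow_mul]
  norm_num

lemma sum_powerset_neg_one_ratq (S : Finset (Fin N)) :
    ∑ T ∈ S.powerset, ((-1 : ℚ)) ^ T.card = if S = ∅ then 1 else 0 := by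
  have := Finset.sum_powerset_neg_one_pow_card (x := S)
  have h2 : ((∑ m ∈ S.powerset, (-1 : ℤ) ^ m.card : ℤ) : ℚ)
      = ((if S = ∅ then 1 else 0 : ℤ) : ℚ) := by rw [this]
  push_cast at h2
  rw [h2]

lemma full_sum (C : Finset (Fin N)) :
    ∑ D ∈ Finset.univ.powerset.filter (fun D => C ⊆ D), ((-1) : ℚ) ^ (N - D.card)
      = if C = Finset.univ then 1 else 0 := by
  have hcard : ∀ T ∈ Cᶜ.powerset, (C ∪ T).card = C.card + T.card := by
    intro T hT
    exact Finset.card_union_of_disjoint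
      (Finset.disjoint_left.2 fun a haC haT =>
        (Finset.mem_compl.1 (Finset.mem_powerset.1 hT haT)) haC)
  rw [Finset.sum_nbij' (i := fun D => D \ C) (j := fun T => C ∪ T)
    (t := Cᶜ.powerset) (g := fun T => ((-1) : ℚ) ^ (N - (C ∪ T).card))]
  · have hCle : C.card ≤ N := by
      have := Finset.card_le_univ C
      simpa using this
    have step : ∀ T ∈ Cᶜ.powerset, ((-1 : ℚ)) ^ (N - (C ∪ T).card)
        = (-1) ^ (N - C.card) * (-1) ^ T.card := by
      intro T hT
      have hT2 : T.card ≤ Cᶜ.card := Finset.card_le_card (Finset.mem_powerset.1 hT)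
      have hTc : Cᶜ.card = N - C.card := by
        rw [Finset.card_compl]
        simp
      rw [hcard T hT, show N - (C.card + T.card) = (N - C.card) - T.card from by omega]
      exact neg_one_pow_sub (by omega)
    rw [Finset.sum_congr rfl step, ← Finset.mul_sum, sum_powerset_neg_one_ratq]
    by_cases hc : C = Finset.univ
    · have : C.card = N := by rw [hc]; simp
      simp [hc, this]
    · have : Cᶜ ≠ ∅ := by
        intro h
        apply hc
        have := congrArg (fun X => Xᶜ) h
        simpa using this
      simp [hc, this]
  · intro D hD
    exact Finset.mem_powerset.2 (fun a ha =>
      Finset.mem_compl.2 fun hc => (Finset.mem_sdiff.1 ha).2 hc)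
  · intro T hT
    refine Finset.mem_filter.2 ⟨Finset.mem_powerset.2 (Finset.subset_univ _), Finset.subset_union_left⟩
  · intro D hD
    exact Finset.union_sdiff_of_subset (Finset.mem_filter.1 hD).2
  · intro T hT
    exact Finset.union_sdiff_cancel_left
      (Finset.disjoint_left.2 fun a haC haT =>
        (Finset.mem_compl.1 (Finset.mem_powerset.1 hT haT)) haC)
  · intro D hD
    rw [Finset.union_sdiff_of_subset (Finset.mem_filter.1 hD).2]
lemma dom_sum (C : Finset (Fin N)) (hc : c₀ ∈ C) (hC : WConn E C) :
    ∑ D ∈ Finset.univ.powerset.filter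
        (fun D => WConn E D ∧ D ∪ wNbhd E D = Finset.univ),
      (if C ⊆ D then ((-1) : ℚ) ^ (N - D.card) else 0)
      = if C = Finset.univ then 1 else 0 := by
  have e1 : ∑ D ∈ Finset.univ.powerset.filter
        (fun D => WConn E D ∧ D ∪ wNbhd E D = Finset.univ),
      (if C ⊆ D then ((-1) : ℚ) ^ (N - D.card) else 0)
      = ∑ D ∈ Finset.univ.powerset,
          (if C ⊆ D ∧ (WConn E D ∧ D ∪ wNbhd E D = Finset.univ)
            then ((-1) : ℚ) ^ (N - D.card) else 0) := by
    rw [Finset.sum_filter]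
    apply Finset.sum_congr rfl
    intro D _
    split_ifs with h1 h2 h3 <;> tauto
  have e2 : ∑ D ∈ Finset.univ.powerset.filter
        (fun D => C ⊆ D ∧ ¬(WConn E D ∧ D ∪ wNbhd E D = Finset.univ)),
      ((-1) : ℚ) ^ (N - D.card)
      = ∑ D ∈ Finset.univ.powerset,
          (if C ⊆ D ∧ ¬(WConn E D ∧ D ∪ wNbhd E D = Finset.univ)
            then ((-1) : ℚ) ^ (N - D.card) else 0) := Finset.sum_filter _ _
  have e3 : ∑ D ∈ Finset.univ.powerset.filter (fun D => C ⊆ D),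
      ((-1) : ℚ) ^ (N - D.card)
      = ∑ D ∈ Finset.univ.powerset,
          (if C ⊆ D then ((-1) : ℚ) ^ (N - D.card) else 0) := Finset.sum_filter _ _
  have key : ∀ D : Finset (Fin N),
      (if C ⊆ D then ((-1) : ℚ) ^ (N - D.card) else 0)
      = (if C ⊆ D ∧ (WConn E D ∧ D ∪ wNbhd E D = Finset.univ)
          then ((-1) : ℚ) ^ (N - D.card) else 0)
        + (if C ⊆ D ∧ ¬(WConn E D ∧ D ∪ wNbhd E D = Finset.univ)
            then ((-1) : ℚ) ^ (N - D.card) else 0) := by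
    intro D
    split_ifs <;> first | (exfalso; tauto) | ring
  rw [e1]
  have hsum := full_sum (N := N) C
  rw [e3] at hsum
  rw [Finset.sum_congr rfl (fun D _ => key D), Finset.sum_add_distrib] at hsum
  rw [← e2, cancel_sum C hc hC, add_zero] at hsum
  exact hsum
end

section
variable {n : ℕ} {E : Fin (n+1) → Fin (n+1) → Prop}

lemma walk_wconn (w : Fin (n+1) → Fin (n+1))
    (h1 : ∀ m : Fin n, E (w m.castSucc) (w m.succ)) :
    WConn E (Finset.image w Finset.univ) := by
  set C := Finset.image w Finset.univ with hC
  have hmem : ∀ a : Fin (n+1), w a ∈ C := fun a =>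
    Finset.mem_image_of_mem w (Finset.mem_univ a)
  have reach : ∀ k : ℕ, (hk : k < n + 1) →
      Relation.ReflTransGen (fun a b => a ∈ C ∧ b ∈ C ∧ (E a b ∨ E b a))
        (w 0) (w ⟨k, hk⟩) := by
    intro k
    induction k with
    | zero => intro hk; exact Relation.ReflTransGen.refl
    | succ k ih =>
      intro hk
      have hk' : k < n + 1 := Nat.lt_of_succ_lt hk
      have hkn : k < n := Nat.lt_of_succ_lt_succ hk
      refine (ih hk').tail ?_
      refine ⟨hmem _, hmem _, Or.inl ?_⟩
      have := h1 ⟨k, hkn⟩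
      have e1 : (⟨k, hkn⟩ : Fin n).castSucc = (⟨k, hk'⟩ : Fin (n+1)) := rfl
      have e2 : (⟨k, hkn⟩ : Fin n).succ = (⟨k+1, hk⟩ : Fin (n+1)) := rfl
      rwa [e1, e2] at this
  intro a ha b hb
  obtain ⟨x, _, rfl⟩ := Finset.mem_image.1 ha
  obtain ⟨y, _, rfl⟩ := Finset.mem_image.1 hb
  have hsym : Symmetric (fun a b => a ∈ C ∧ b ∈ C ∧ (E a b ∨ E b a)) :=
    fun _ _ h => ⟨h.2.1, h.1, h.2.2.symm⟩
  have hx := reach x.val x.isLt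
  have hy := reach y.val y.isLt
  rw [Fin.eta] at hx hy
  exact ((@Relation.ReflTransGen.stdSymm _ _ ⟨fun a b h => hsym h⟩).symm _ _ hx).trans hy

def okw (E : Fin (n+1) → Fin (n+1) → Prop) (w : Fin (n+1) → Fin (n+1)) : Prop :=
  (∀ m : Fin n, E (w m.castSucc) (w m.succ)) ∧ E (w (Fin.last n)) (w 0)

lemma okw_iff_cyc (w : Fin (n+1) → Fin (n+1)) :
    okw E w ↔ ∀ m : Fin (n+1), E (w m) (w (m + 1)) := by
  constructor
  · rintro ⟨h1, h2⟩ m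
    by_cases hm : m = Fin.last n
    · rw [hm, Fin.last_add_one]
      exact h2
    · have hmn : m.val < n := by
        have h3 := m.isLt
        have h4 : m.val ≠ n := fun h => hm (Fin.ext h)
        omega
      have e1 : (⟨m.val, hmn⟩ : Fin n).castSucc = m := Fin.ext rfl
      have e2 : (⟨m.val, hmn⟩ : Fin n).succ = m + 1 := by
        rw [← Fin.coeSucc_eq_succ, e1]
      have := h1 ⟨m.val, hmn⟩
      rwa [e1, e2] at this
  · intro h
    constructor
    · intro m
      have := h m.castSucc
      rwa [Fin.coeSucc_eq_succ] at this
    · have := h (Fin.last n)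
      rwa [Fin.last_add_one] at this

lemma rot_cyc {w : Fin (n+1) → Fin (n+1)} (h : ∀ m : Fin (n+1), E (w m) (w (m + 1)))
    (k : Fin (n+1)) :
    ∀ m : Fin (n+1), E ((fun m => w (m + k)) m) ((fun m => w (m + k)) (m + 1)) := by
  intro m
  show E (w (m + k)) (w (m + 1 + k))
  have e : m + 1 + k = m + k + 1 := by abel
  rw [e]
  exact h (m + k)

lemma rot_bij {w : Fin (n+1) → Fin (n+1)} (h : Function.Bijective w) (k : Fin (n+1)) :
    Function.Bijective (fun m => w (m + k)) :=
  h.comp (Equiv.addRight k).bijective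

lemma sub_rot_bij {w : Fin (n+1) → Fin (n+1)} (h : Function.Bijective w) (k : Fin (n+1)) :
    Function.Bijective (fun m : Fin (n+1) => w (m - k)) := by
  have e : (fun m : Fin (n+1) => w (m - k)) = fun m => w (m + (-k)) := by
    funext m; rw [sub_eq_add_neg]
  rw [e]
  exact rot_bij h (-k)

noncomputable def rotEquiv (E : Fin (n+1) → Fin (n+1) → Prop) (i : Fin (n+1)) :
    {w : Fin (n+1) → Fin (n+1) // Function.Bijective w ∧ okw E w} ≃
      Fin (n+1) × {w : Fin (n+1) → Fin (n+1) //
        Function.Bijective w ∧ w 0 = i ∧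
        (∀ m : Fin n, E (w m.castSucc) (w m.succ)) ∧ E (w (Fin.last n)) (w 0)} where
  toFun f :=
    ⟨(Equiv.ofBijective f.1 f.2.1).symm i,
     ⟨fun m => f.1 (m + (Equiv.ofBijective f.1 f.2.1).symm i),
      rot_bij f.2.1 _,
      by
        show f.1 (0 + (Equiv.ofBijective f.1 f.2.1).symm i) = i
        rw [zero_add]
        exact (Equiv.ofBijective f.1 f.2.1).apply_symm_apply i,
      ((okw_iff_cyc (E := E) _).2 (rot_cyc ((okw_iff_cyc f.1).1 f.2.2) _)).1,
      ((okw_iff_cyc (E := E) _).2 (rot_cyc ((okw_iff_cyc f.1).1 f.2.2) _)).2⟩⟩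
  invFun p :=
    ⟨fun m => p.2.1 (m - p.1),
     sub_rot_bij p.2.2.1 p.1,
     (okw_iff_cyc (E := E) _).2 (by
        have hcyc := (okw_iff_cyc p.2.1).1 ⟨p.2.2.2.2.1, p.2.2.2.2.2⟩
        intro m
        have e : m + 1 - p.1 = (m - p.1) + 1 := by abel
        show E (p.2.1 (m - p.1)) (p.2.1 (m + 1 - p.1))
        rw [e]
        exact hcyc (m - p.1))⟩
  left_inv := by
    intro f
    apply Subtype.ext
    funext m
    show f.1 (m - (Equiv.ofBijective f.1 f.2.1).symm i
      + (Equiv.ofBijective f.1 f.2.1).symm i) = f.1 m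
    congr 1
    abel
  right_inv := by
    rintro ⟨k, u⟩
    have hwk : (fun m : Fin (n+1) => u.1 (m - k)) k = i := by
      show u.1 (k - k) = i
      rw [sub_self]
      exact u.2.2.1
    have hk : ∀ h : Function.Bijective (fun m : Fin (n+1) => u.1 (m - k)),
        (Equiv.ofBijective _ h).symm i = k := by
      intro h
      rw [Equiv.symm_apply_eq]
      exact hwk.symm
    refine Prod.ext (hk _) ?_
    apply Subtype.ext
    funext m
    show (fun m' : Fin (n+1) => u.1 (m' - k))
        (m + (Equiv.ofBijective (fun m' : Fin (n+1) => u.1 (m' - k)) _).symm i) = u.1 m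
    rw [hk]
    show u.1 (m + k - k) = u.1 m
    congr 1
    abel
end

theorem stmt12 (n : ℕ) (E : Fin (n + 1) → Fin (n + 1) → Prop)
    (A : Matrix (Fin (n + 1)) (Fin (n + 1)) ℚ)
    (hA : ∀ i j, A i j = if E i j then 1 else 0)
    (i : Fin (n + 1)) :
    (Nat.card {w : Fin (n + 1) → Fin (n + 1) //
        Function.Bijective w ∧ w 0 = i ∧
        (∀ m : Fin n, E (w m.castSucc) (w m.succ)) ∧ E (w (Fin.last n)) (w 0)} : ℚ)
      = (1 / (n + 1)) * ∑ D ∈ Finset.univ.powerset.filter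
            (fun D : Finset (Fin (n + 1)) =>
              WConn E D ∧ D ∪ wNbhd E D = Finset.univ),
          (-1 : ℚ) ^ (n + 1 - D.card) * Matrix.trace (restrict A D ^ (n + 1)) := by
  set S := Finset.univ.powerset.filter
      (fun D : Finset (Fin (n + 1)) => WConn E D ∧ D ∪ wNbhd E D = Finset.univ) with hS
  have key : ∑ D ∈ S, (-1 : ℚ) ^ (n + 1 - D.card) * Matrix.trace (restrict A D ^ (n + 1))
      = ∑ w : Fin (n+1) → Fin (n+1),
          (if okw E w ∧ Finset.image w Finset.univ = Finset.univ then (1 : ℚ) else 0) := by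
    have e1 : ∀ D ∈ S, (-1 : ℚ) ^ (n + 1 - D.card) * Matrix.trace (restrict A D ^ (n + 1))
        = ∑ w : Fin (n+1) → Fin (n+1),
            (-1 : ℚ) ^ (n + 1 - D.card) *
              (if ((∀ m : Fin n, E (w m.castSucc) (w m.succ)) ∧ E (w (Fin.last n)) (w 0))
                  ∧ (∀ k, w k ∈ D) then (1 : ℚ) else 0) := by
      intro D _
      rw [trace_restrict E A hA D (trace_walks _), Finset.mul_sum]
    rw [Finset.sum_congr rfl e1, Finset.sum_comm]
    apply Finset.sum_congr rfl
    intro w _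
    by_cases hok : okw E w
    · have e2 : ∀ D ∈ S, (-1 : ℚ) ^ (n + 1 - D.card) *
          (if ((∀ m : Fin n, E (w m.castSucc) (w m.succ)) ∧ E (w (Fin.last n)) (w 0))
              ∧ (∀ k, w k ∈ D) then (1 : ℚ) else 0)
          = (if Finset.image w Finset.univ ⊆ D then (-1 : ℚ) ^ (n + 1 - D.card) else 0) := by
        intro D _
        have hsub : ((∀ k, w k ∈ D)) ↔ Finset.image w Finset.univ ⊆ D := by
          rw [Finset.image_subset_iff]
          exact ⟨fun h x _ => h x, fun h x => h x (Finset.mem_univ x)⟩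
        split_ifs with h1 h2 h3
        · ring
        · exact absurd (hsub.1 h1.2) h2
        · exact absurd ⟨⟨hok.1, hok.2⟩, hsub.2 h3⟩ h1
        · ring
      rw [Finset.sum_congr rfl e2, hS]
      have hc0 : w 0 ∈ Finset.image w Finset.univ :=
        Finset.mem_image_of_mem w (Finset.mem_univ 0)
      have := dom_sum (E := E) (Finset.image w Finset.univ) hc0 (walk_wconn w hok.1)
      rw [this]
      split_ifs with h1 h2 <;> first | rfl | tauto
    · have e2 : ∀ D ∈ S, (-1 : ℚ) ^ (n + 1 - D.card) *
          (if ((∀ m : Fin n, E (w m.castSucc) (w m.succ)) ∧ E (w (Fin.last n)) (w 0))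
              ∧ (∀ k, w k ∈ D) then (1 : ℚ) else 0) = 0 := by
        intro D _
        rw [if_neg, mul_zero]
        exact fun h => hok ⟨h.1.1, h.1.2⟩
      rw [Finset.sum_congr rfl e2, Finset.sum_const, smul_zero, if_neg]
      exact fun h => hok h.1
  have key2 : ∑ w : Fin (n+1) → Fin (n+1),
      (if okw E w ∧ Finset.image w Finset.univ = Finset.univ then (1 : ℚ) else 0)
      = ∑ w : Fin (n+1) → Fin (n+1),
          (if Function.Bijective w ∧ okw E w then (1 : ℚ) else 0) := by
    apply Finset.sum_congr rfl
    intro w _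
    have himg : Finset.image w Finset.univ = Finset.univ ↔ Function.Bijective w := by
      constructor
      · intro h
        apply Finite.surjective_iff_bijective.1
        intro y
        have : y ∈ Finset.image w Finset.univ := by rw [h]; exact Finset.mem_univ y
        obtain ⟨x, _, hx⟩ := Finset.mem_image.1 this
        exact ⟨x, hx⟩
      · intro h
        apply Finset.Subset.antisymm (Finset.subset_univ _)
        intro y _
        obtain ⟨x, hx⟩ := h.2 y
        exact Finset.mem_image.2 ⟨x, Finset.mem_univ x, hx⟩
    congr 1
    rw [eq_iff_iff]
    exact ⟨fun h => ⟨himg.1 h.2, h.1⟩, fun h => ⟨h.2, himg.2 h.1⟩⟩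
  have key3 : ∑ w : Fin (n+1) → Fin (n+1),
      (if Function.Bijective w ∧ okw E w then (1 : ℚ) else 0)
      = ((n + 1 : ℕ) : ℚ) * (Nat.card {w : Fin (n + 1) → Fin (n + 1) //
          Function.Bijective w ∧ w 0 = i ∧
          (∀ m : Fin n, E (w m.castSucc) (w m.succ)) ∧ E (w (Fin.last n)) (w 0)} : ℚ) := by
    rw [Finset.sum_boole]
    have : Nat.card {w : Fin (n+1) → Fin (n+1) // Function.Bijective w ∧ okw E w}
        = (Finset.univ.filter (fun w : Fin (n+1) → Fin (n+1) =>
            Function.Bijective w ∧ okw E w)).card := by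
      rw [Nat.card_eq_fintype_card, Fintype.card_subtype]
    rw [← this, Nat.card_congr (rotEquiv E i), Nat.card_prod, Nat.card_eq_fintype_card,
      Fintype.card_fin]
    push_cast
    ring
  rw [key, key2, key3]
  have hne : ((n : ℚ) + 1) ≠ 0 := by positivity
  push_cast
  field_simp
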